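/- arXiv:1111.0788 — 6 statements merged into one kernel-verified Lean document; each statement's English description precedes it below -/
import Mathlib

section
/- For all real θ in [-π, π], θ² ≥ 5/2 - (8/3)cos θ + (1/6)cos 2θ. -/
open Real

private lemma nonneg_of_deriv (f : ℝ → ℝ) (hf : Differentiable ℝ f) (h0 : f 0 = 0)
    (hd : ∀ x, 0 ≤ x → 0 ≤ deriv f x) {x : ℝ} (hx : 0 ≤ x) : 0 ≤ f x := by
  have h := monotoneOn_of_deriv_nonneg (convex_Ici 0) hf.continuous.continuousOn
    hf.differentiableOn (fun y hy => hd y (le_of_lt (by simpa [interior_Ici] using hy)))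
  simpa [h0] using h Set.self_mem_Ici hx hx

private lemma sin_ge_cubic' {x : ℝ} (hx : 0 ≤ x) : x - x ^ 3 / 6 ≤ Real.sin x := by
  have key := nonneg_of_deriv (fun x => Real.sin x - x + x ^ 3 / 6)
    (by fun_prop) (by norm_num)
    (fun y _ => by
      have h : HasDerivAt (fun x => Real.sin x - x + x ^ 3 / 6)
          (Real.cos y - 1 + (3 * y ^ 2) / 6) y := by
        simpa [Pi.add_def, Pi.sub_def] using ((Real.hasDerivAt_sin y).sub (hasDerivAt_id y)).add
          ((hasDerivAt_pow 3 y).div_const 6)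
      rw [h.deriv]
      nlinarith [Real.one_sub_sq_div_two_le_cos (x := y)]) hx
  linarith

private lemma cos_le_quartic {x : ℝ} (hx : 0 ≤ x) :
    Real.cos x ≤ 1 - x ^ 2 / 2 + x ^ 4 / 24 := by
  have key := nonneg_of_deriv (fun x => 1 - x ^ 2 / 2 + x ^ 4 / 24 - Real.cos x)
    (by fun_prop) (by norm_num)
    (fun y hy => by
      have h : HasDerivAt (fun x => 1 - x ^ 2 / 2 + x ^ 4 / 24 - Real.cos x)
          (0 - (2 * y) / 2 + (4 * y ^ 3) / 24 - (-Real.sin y)) y := by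
        simpa [Pi.add_def, Pi.sub_def] using (((hasDerivAt_const y (1:ℝ)).sub ((hasDerivAt_pow 2 y).div_const 2)).add
          ((hasDerivAt_pow 4 y).div_const 24)).sub (Real.hasDerivAt_cos y)
      rw [h.deriv]
      nlinarith [sin_ge_cubic' hy]) hx
  linarith

private lemma sin_le_quintic {x : ℝ} (hx : 0 ≤ x) :
    Real.sin x ≤ x - x ^ 3 / 6 + x ^ 5 / 120 := by
  have key := nonneg_of_deriv (fun x => x - x ^ 3 / 6 + x ^ 5 / 120 - Real.sin x)
    (by fun_prop) (by norm_num)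
    (fun y hy => by
      have h : HasDerivAt (fun x => x - x ^ 3 / 6 + x ^ 5 / 120 - Real.sin x)
          (1 - (3 * y ^ 2) / 6 + (5 * y ^ 4) / 120 - Real.cos y) y := by
        simpa [Pi.add_def, Pi.sub_def] using (((hasDerivAt_id y).sub ((hasDerivAt_pow 3 y).div_const 6)).add
          ((hasDerivAt_pow 5 y).div_const 120)).sub (Real.hasDerivAt_sin y)
      rw [h.deriv]
      nlinarith [cos_le_quartic hy]) hx
  linarith

private lemma cos_ge_sextic {x : ℝ} (hx : 0 ≤ x) :
    1 - x ^ 2 / 2 + x ^ 4 / 24 - x ^ 6 / 720 ≤ Real.cos x := by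
  have key := nonneg_of_deriv
    (fun x => Real.cos x - (1 - x ^ 2 / 2 + x ^ 4 / 24 - x ^ 6 / 720))
    (by fun_prop) (by norm_num)
    (fun y hy => by
      have h : HasDerivAt
          (fun x => Real.cos x - (1 - x ^ 2 / 2 + x ^ 4 / 24 - x ^ 6 / 720))
          (-Real.sin y - (0 - (2 * y) / 2 + (4 * y ^ 3) / 24 - (6 * y ^ 5) / 720)) y := by
        simpa [Pi.add_def, Pi.sub_def] using (Real.hasDerivAt_cos y).sub
          ((((hasDerivAt_const y (1:ℝ)).sub ((hasDerivAt_pow 2 y).div_const 2)).add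
            ((hasDerivAt_pow 4 y).div_const 24)).sub ((hasDerivAt_pow 6 y).div_const 720))
      rw [h.deriv]
      nlinarith [sin_le_quintic hy]) hx
  linarith

private lemma key_ineq {θ : ℝ} (h0 : 0 ≤ θ) (h1 : θ ≤ π) :
    θ ^ 2 ≥ 5 / 2 - (8 / 3) * Real.cos θ + (1 / 6) * Real.cos (2 * θ) := by
  have hπ : θ ≤ 3.15 := h1.trans (by linarith [Real.pi_lt_d2])
  have hc1 : Real.cos θ ≤ 1 := Real.cos_le_one θ
  have hc2 : 1 - θ ^ 2 / 2 + θ ^ 4 / 24 - θ ^ 6 / 720 ≤ Real.cos θ := cos_ge_sextic h0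
  rw [Real.cos_two_mul]
  set c := Real.cos θ with hc
  set U : ℝ := θ ^ 2 / 2 - θ ^ 4 / 24 + θ ^ 6 / 720 with hU
  have hu : 1 - c ≤ U := by simp only [hU]; linarith
  have hu0 : 0 ≤ 1 - c := by linarith
  have hpoly : θ ^ 2 ≥ 2 * U + U ^ 2 / 3 := by
    have ht : θ ^ 2 ≤ 9.9225 := by nlinarith
    have hA : (0:ℝ) ≤ 17280 - 1620 * θ ^ 2 := by nlinarith
    have hB : (0:ℝ) ≤ 60 * (θ ^ 2) ^ 2 - (θ ^ 2) ^ 3 := by nlinarith [sq_nonneg θ, sq_nonneg (θ^2)]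
    have h3 : (0:ℝ) ≤ (θ ^ 2) ^ 3 := pow_nonneg (sq_nonneg θ) 3
    simp only [hU]
    nlinarith [mul_nonneg h3 hA, mul_nonneg h3 hB]
  nlinarith [hu, hu0, hpoly, sq_nonneg (U - (1 - c))]

theorem cos_series_lower_bound (θ : ℝ) (hθ : θ ∈ Set.Icc (-π) π) :
    θ ^ 2 ≥ 5 / 2 - (8 / 3) * Real.cos θ + (1 / 6) * Real.cos (2 * θ) := by
  obtain ⟨h1, h2⟩ := hθ
  rcases le_total 0 θ with h | h
  · exact key_ineq h h2
  · have h3 := key_ineq (neg_nonneg.2 h) (by linarith)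
    rw [neg_sq, Real.cos_neg, show (2:ℝ) * -θ = -(2 * θ) by ring, Real.cos_neg] at h3
    exact h3
end

section
/- For a probability distribution p(n) on the nonnegative integers with mean μ = Σ n·p(n) finite, the Shannon entropy H = -Σ p(n) log p(n) satisfies H ≤ log(μ+1) + μ·log(1 + 1/μ) (with H ≤ 0 = log 1 when μ = 0). -/
open Real

/-- The Shannon entropy (in nats) of a probability distribution on ℕ with finite
mean μ is at most that of the geometric (thermal) distribution with the same mean:
H ≤ log(μ+1) + μ·log(1 + 1/μ).  (When μ = 0 the right-hand side is 0, by the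
convention 1/0 = 0.) -/
theorem entropy_le_geometric (p : ℕ → ℝ) (hp : ∀ n, 0 ≤ p n)
    (hsum : Summable p) (hp1 : ∑' n, p n = 1)
    (hmean : Summable (fun n : ℕ => (n : ℝ) * p n))
    (hent : Summable (fun n => p n * Real.log (p n)))
    (μ H : ℝ) (hμ : μ = ∑' n : ℕ, (n : ℝ) * p n)
    (hH : H = -∑' n, p n * Real.log (p n)) :
    H ≤ Real.log (μ + 1) + μ * Real.log (1 + 1 / μ) := by
  have hμ0 : 0 ≤ μ := by
    rw [hμ]; exact tsum_nonneg fun n => mul_nonneg (Nat.cast_nonneg n) (hp n)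
  rcases eq_or_lt_of_le hμ0 with h0 | hpos
  · -- μ = 0
    have hz : ∀ n : ℕ, (n : ℝ) * p n = 0 := by
      intro n
      have hle : (n : ℝ) * p n ≤ ∑' m : ℕ, (m : ℝ) * p m :=
        Summable.le_tsum hmean n fun m _ => mul_nonneg (Nat.cast_nonneg m) (hp m)
      rw [← hμ, ← h0] at hle
      exact le_antisymm hle (mul_nonneg (Nat.cast_nonneg n) (hp n))
    have hpn : ∀ n : ℕ, n ≠ 0 → p n = 0 := by
      intro n hn
      rcases mul_eq_zero.mp (hz n) with h | h
      · exact absurd (Nat.cast_eq_zero.mp h) hn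
      · exact h
    have hp0 : p 0 = 1 := by
      rw [← hp1]
      exact (tsum_eq_single 0 fun n hn => hpn n hn).symm
    have hHl : ∀ n, p n * Real.log (p n) = 0 := by
      intro n
      rcases Nat.eq_zero_or_pos n with rfl | hn
      · rw [hp0]; simp
      · rw [hpn n hn.ne']; simp
    have hH0 : H = 0 := by
      rw [hH, tsum_congr hHl]; simp
    rw [hH0, ← h0]; simp
  · -- μ > 0
    have hμ1 : 0 < μ + 1 := by linarith
    set r : ℝ := μ / (μ + 1) with hr
    have hr0 : 0 < r := div_pos hpos hμ1
    have hr1 : r < 1 := by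
      rw [hr]
      exact (div_lt_one hμ1).mpr (by linarith)
    set q : ℕ → ℝ := fun n => (1 / (μ + 1)) * r ^ n with hqdef
    have hq_pos : ∀ n, 0 < q n := fun n =>
      mul_pos (by positivity) (pow_pos hr0 n)
    have hq_sum : Summable q :=
      (summable_geometric_of_lt_one hr0.le hr1).mul_left _
    have h1mr : 1 - r = 1 / (μ + 1) := by
      rw [hr]; field_simp; ring
    have hq_tsum : ∑' n, q n = 1 := by
      rw [hqdef]
      simp only
      rw [tsum_mul_left, tsum_geometric_of_lt_one hr0.le hr1, h1mr]
      field_simp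
    -- log q n decomposition
    have hlogq : ∀ n : ℕ, p n * Real.log (q n) =
        Real.log (1 / (μ + 1)) * p n + Real.log r * ((n : ℝ) * p n) := by
      intro n
      rw [hqdef]
      simp only
      rw [Real.log_mul (by positivity) (by positivity), Real.log_pow]
      ring
    have hsum_plogq : Summable (fun n => p n * Real.log (q n)) := by
      apply Summable.congr _ (fun n => (hlogq n).symm)
      exact (hsum.mul_left _).add (hmean.mul_left _)
    have htsum_plogq : ∑' n, p n * Real.log (q n) =
        Real.log (1 / (μ + 1)) + μ * Real.log r := by
      rw [tsum_congr hlogq, Summable.tsum_add (hsum.mul_left _) (hmean.mul_left _),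
        tsum_mul_left, tsum_mul_left, hp1, ← hμ]
      ring
    -- Gibbs inequality pointwise
    have hgibbs : ∀ n, p n * Real.log (q n) - p n * Real.log (p n) ≤ q n - p n := by
      intro n
      rcases eq_or_lt_of_le (hp n) with hpz | hppos
      · rw [← hpz]; simp; exact (hq_pos n).le
      · have hlog := Real.log_le_sub_one_of_pos (div_pos (hq_pos n) hppos)
        rw [Real.log_div (hq_pos n).ne' hppos.ne'] at hlog
        have := mul_le_mul_of_nonneg_left hlog (hp n)
        calc p n * Real.log (q n) - p n * Real.log (p n)
            = p n * (Real.log (q n) - Real.log (p n)) := by ring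
          _ ≤ p n * (q n / p n - 1) := this
          _ = q n - p n := by field_simp
    have hsumL : Summable (fun n => p n * Real.log (q n) - p n * Real.log (p n)) :=
      hsum_plogq.sub hent
    have hsumR : Summable (fun n => q n - p n) := hq_sum.sub hsum
    have hle := Summable.tsum_le_tsum hgibbs hsumL hsumR
    rw [Summable.tsum_sub hsum_plogq hent, Summable.tsum_sub hq_sum hsum, hq_tsum, hp1,
      htsum_plogq, sub_self] at hle
    -- conclude
    have hlogr : Real.log r = Real.log μ - Real.log (μ + 1) :=
      Real.log_div hpos.ne' hμ1.ne'
    have hlog1 : Real.log (1 / (μ + 1)) = -Real.log (μ + 1) := by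
      rw [one_div, Real.log_inv]
    have heq : (1 : ℝ) + 1 / μ = (μ + 1) / μ := by field_simp
    have hlog2 : Real.log (1 + 1 / μ) = Real.log (μ + 1) - Real.log μ := by
      rw [heq, Real.log_div hμ1.ne' hpos.ne']
    rw [hH]
    rw [hlogr, hlog1] at hle
    rw [hlog2]
    nlinarith [hle]
end

section
/- Suppose a probability density p on [-π, π] and a probability distribution q on ℕ satisfy the entropic uncertainty relation H(p) + H(q) ≥ log 2π, where q has finite mean ⟨N⟩ and p has second moment (δΦ̂)² = ∫ θ² p(θ) dθ. Then (δΦ̂)² > (2π/e) e^{-2H(q)}. -/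
open Real MeasureTheory

/-- If a probability density p on [-π,π] (with second moment (δΦ̂)²) and a
probability distribution q on ℕ (with finite mean) satisfy the entropic
uncertainty relation H(p) + H(q) ≥ log 2π, then (δΦ̂)² > (2π/e)·e^{-2H(q)}. -/
theorem second_moment_gt_of_entropic_uncertainty
    (p : ℝ → ℝ) (hmeas : Measurable p) (hpos : ∀ x, 0 ≤ p x)
    (hsupp : ∀ x, x ∉ Set.Icc (-π) π → p x = 0)
    (hint : Integrable p) (hp1 : ∫ x, p x = 1)
    (hx2 : Integrable (fun x => x ^ 2 * p x))
    (hplogp : Integrable (fun x => p x * Real.log (p x)))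
    (q : ℕ → ℝ) (hq : ∀ n, 0 ≤ q n) (hqsum : Summable q) (hq1 : ∑' n, q n = 1)
    (hqmean : Summable (fun n : ℕ => (n : ℝ) * q n))
    (hqent : Summable (fun n => q n * Real.log (q n)))
    (δΦ2 Hp Hq : ℝ)
    (hδ : δΦ2 = ∫ θ, θ ^ 2 * p θ)
    (hHp : Hp = -∫ θ, p θ * Real.log (p θ))
    (hHq : Hq = -∑' n, q n * Real.log (q n))
    (hEUR : Hp + Hq ≥ Real.log (2 * π)) :
    δΦ2 > (2 * π / Real.exp 1) * Real.exp (-2 * Hq) := by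
  have hπ : 0 < π := Real.pi_pos
  -- δΦ2 > 0
  have hσnn : 0 ≤ δΦ2 := by
    rw [hδ]; exact integral_nonneg fun x => mul_nonneg (sq_nonneg x) (hpos x)
  have hσpos : 0 < δΦ2 := by
    rcases hσnn.lt_or_eq with h | h
    · exact h
    exfalso
    have h0 : ∫ x, x ^ 2 * p x = 0 := by rw [← hδ, ← h]
    have hae : (fun x => x ^ 2 * p x) =ᵐ[volume] 0 :=
      (integral_eq_zero_iff_of_nonneg (fun x => mul_nonneg (sq_nonneg x) (hpos x)) hx2).mp h0
    have hne : ∀ᵐ x : ℝ, x ≠ 0 := by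
      have : volume ({0} : Set ℝ) = 0 := measure_singleton 0
      exact (MeasureTheory.ae_iff).mpr (by simpa using this)
    have hp0 : p =ᵐ[volume] 0 := by
      filter_upwards [hae, hne] with x hx hx0
      have : x ^ 2 ≠ 0 := pow_ne_zero 2 hx0
      have := hx
      simp only [Pi.zero_apply] at this ⊢
      exact by
        rcases mul_eq_zero.mp this with h' | h'
        · exact absurd h' ‹x ^ 2 ≠ 0›
        · exact h'
    have : (1 : ℝ) = 0 := by
      rw [← hp1, integral_congr_ae hp0]; simp
    norm_num at this
  set σ2 := δΦ2 with hσ2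
  have h2σ : (0 : ℝ) < 2 * σ2 := by linarith
  have hb : (0 : ℝ) < (2 * σ2)⁻¹ := inv_pos.mpr h2σ
  have hcc : (0 : ℝ) < 2 * π * σ2 := by positivity
  set c := Real.sqrt (2 * π * σ2) with hc
  have hcpos : 0 < c := Real.sqrt_pos.mpr hcc
  set g : ℝ → ℝ := fun x => c⁻¹ * Real.exp (-((2 * σ2)⁻¹ * x ^ 2)) with hg
  have hgpos : ∀ x, 0 < g x := fun x => mul_pos (inv_pos.mpr hcpos) (Real.exp_pos _)
  have hgint : Integrable g := by
    have h := (integrable_exp_neg_mul_sq hb).const_mul c⁻¹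
    rw [hg]
    simpa [neg_mul] using h
  have hgint1 : ∫ x, g x = 1 := by
    rw [hg]
    simp only
    rw [integral_const_mul]
    have : ∫ x : ℝ, Real.exp (-((2 * σ2)⁻¹ * x ^ 2)) = Real.sqrt (π / (2 * σ2)⁻¹) := by
      simpa [neg_mul] using integral_gaussian ((2 * σ2)⁻¹)
    rw [this, show π / (2 * σ2)⁻¹ = 2 * π * σ2 by field_simp, ← hc]
    exact inv_mul_cancel₀ hcpos.ne'
  have hlogg : ∀ x, Real.log (g x) = -Real.log c - (2 * σ2)⁻¹ * x ^ 2 := by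
    intro x
    rw [hg]
    rw [Real.log_mul (by positivity) (Real.exp_ne_zero _), Real.log_inv, Real.log_exp]
    ring
  -- integral of p * log g
  have hplogg_eq : (fun x => p x * Real.log (g x)) =
      fun x => (-Real.log c) * p x - (2 * σ2)⁻¹ * (x ^ 2 * p x) := by
    funext x; rw [hlogg x]; ring
  have hplogg_int : Integrable (fun x => p x * Real.log (g x)) := by
    rw [hplogg_eq]; exact (hint.const_mul _).sub (hx2.const_mul _)
  have hJ : ∫ x, p x * Real.log (g x) = -Real.log c - 1 / 2 := by
    rw [hplogg_eq, integral_sub (hint.const_mul _) (hx2.const_mul _),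
      integral_const_mul, integral_const_mul, hp1, ← hδ]
    field_simp
  -- the function f
  set f : ℝ → ℝ := fun x => p x * (Real.log (g x) - Real.log (p x)) with hf
  have hf_eq : f = fun x => p x * Real.log (g x) - p x * Real.log (p x) := by
    funext x; rw [hf]; ring
  have hf_int : Integrable f := by rw [hf_eq]; exact hplogg_int.sub hplogp
  have hfle : ∀ x, f x ≤ g x - p x := by
    intro x
    rcases (hpos x).lt_or_eq with hpx | hpx
    · have hgx := hgpos x
      have hlog : Real.log (g x) - Real.log (p x) ≤ g x / p x - 1 := by
        rw [← Real.log_div hgx.ne' hpx.ne']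
        exact Real.log_le_sub_one_of_pos (div_pos hgx hpx)
      calc f x = p x * (Real.log (g x) - Real.log (p x)) := rfl
        _ ≤ p x * (g x / p x - 1) := by
            exact mul_le_mul_of_nonneg_left hlog hpx.le
        _ = g x - p x := by field_simp
    · rw [hf]; simp only [← hpx]
      simp
      exact (hgpos x).le
  have hfzero : ∀ x, x ∉ Set.Icc (-π) π → f x = 0 := by
    intro x hx
    have h0 := hsupp x hx
    simp [hf, h0]
  -- set integral comparisons
  have hIccMeas : MeasurableSet (Set.Icc (-π) π) := measurableSet_Icc
  have hfI : ∫ x, f x = ∫ x in Set.Icc (-π) π, f x :=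
    (setIntegral_eq_integral_of_forall_compl_eq_zero hfzero).symm
  have hpI : ∫ x in Set.Icc (-π) π, p x = 1 := by
    rw [setIntegral_eq_integral_of_forall_compl_eq_zero hsupp, hp1]
  have hmono : ∫ x in Set.Icc (-π) π, f x ≤ ∫ x in Set.Icc (-π) π, (g x - p x) :=
    setIntegral_mono_on hf_int.integrableOn (hgint.sub hint).integrableOn hIccMeas
      (fun x _ => hfle x)
  have hgI_lt : ∫ x in Set.Icc (-π) π, g x < 1 := by
    have hsplit : (∫ x in Set.Icc (-π) π, g x) + ∫ x in (Set.Icc (-π) π)ᶜ, g x = ∫ x, g x :=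
      integral_add_compl hIccMeas hgint
    have hposc : 0 < ∫ x in (Set.Icc (-π) π)ᶜ, g x := by
      rw [setIntegral_pos_iff_support_of_nonneg_ae
        (Filter.Eventually.of_forall fun x => (hgpos x).le) hgint.integrableOn]
      have hsupg : Function.support g = Set.univ := by
        ext x; simp [Function.mem_support, (hgpos x).ne']
      rw [hsupg, Set.univ_inter]
      have hsub : Set.Ioi π ⊆ (Set.Icc (-π) π)ᶜ := by
        intro x hx
        simp only [Set.mem_compl_iff, Set.mem_Icc, not_and, not_le]
        intro _
        exact hx
      have hmle := measure_mono (μ := volume) hsub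
      rw [Real.volume_Ioi] at hmle
      exact lt_of_lt_of_le (by simp) hmle
    linarith [hgint1 ▸ hsplit]
  have hfneg : ∫ x, f x < 0 := by
    have : ∫ x in Set.Icc (-π) π, (g x - p x) = (∫ x in Set.Icc (-π) π, g x) - 1 := by
      rw [integral_sub hgint.integrableOn hint.integrableOn, hpI]
    rw [hfI]
    calc ∫ x in Set.Icc (-π) π, f x ≤ _ := hmono
      _ = (∫ x in Set.Icc (-π) π, g x) - 1 := this
      _ < 0 := by linarith
  -- Hp < log c + 1/2
  have hHp_lt : Hp < Real.log c + 1 / 2 := by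
    have : ∫ x, f x = (∫ x, p x * Real.log (g x)) - ∫ x, p x * Real.log (p x) := by
      rw [hf_eq, integral_sub hplogg_int hplogp]
    rw [this, hJ] at hfneg
    rw [hHp]
    linarith
  -- arithmetic conclusion
  have hcsq : c * c = 2 * π * σ2 := Real.mul_self_sqrt hcc.le
  have he : (0 : ℝ) < Real.exp 1 := Real.exp_pos 1
  have hB : Real.exp (2 * Hp) < 2 * π * σ2 * Real.exp 1 := by
    have h1 : Real.exp (2 * Hp) < Real.exp (2 * (Real.log c + 1 / 2)) :=
      Real.exp_lt_exp.mpr (by linarith)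
    have h2 : Real.exp (2 * (Real.log c + 1 / 2)) = c * c * Real.exp 1 := by
      rw [show 2 * (Real.log c + 1 / 2) = Real.log c + Real.log c + 1 by ring,
        Real.exp_add, Real.exp_add, Real.exp_log hcpos]
    rw [h2, hcsq] at h1
    exact h1
  have hA : Real.exp (-2 * Hq) ≤ Real.exp (2 * Hp) / (2 * π * (2 * π)) := by
    have h1 : -2 * Hq ≤ 2 * Hp - 2 * Real.log (2 * π) := by linarith
    have h2 : Real.exp (2 * Hp - 2 * Real.log (2 * π)) =
        Real.exp (2 * Hp) / (2 * π * (2 * π)) := by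
      rw [Real.exp_sub, show 2 * Real.log (2 * π) = Real.log (2 * π) + Real.log (2 * π) by ring,
        Real.exp_add, Real.exp_log (by positivity)]
    calc Real.exp (-2 * Hq) ≤ Real.exp (2 * Hp - 2 * Real.log (2 * π)) := Real.exp_le_exp.mpr h1
      _ = _ := h2
  have key : (2 * π / Real.exp 1) * (Real.exp (2 * Hp) / (2 * π * (2 * π))) < σ2 := by
    rw [div_mul_div_comm, div_lt_iff₀ (by positivity)]
    nlinarith [hB, he, hπ]
  calc (2 * π / Real.exp 1) * Real.exp (-2 * Hq)
      ≤ (2 * π / Real.exp 1) * (Real.exp (2 * Hp) / (2 * π * (2 * π))) :=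
        mul_le_mul_of_nonneg_left hA (by positivity)
    _ < σ2 := key
end

section
/- Suppose a probability density p on [-π, π] and a probability distribution q on ℕ satisfy H(p) + H(q) ≥ log 2π, where q has finite mean ⟨N⟩. Then the root second moment δΦ̂ = (∫ θ² p(θ) dθ)^{1/2} satisfies δΦ̂ > √(2π/e³) / (⟨N⟩ + 1). -/
open Real MeasureTheory

private lemma gibbs_pt {x r : ℝ} (hx : 0 ≤ x) (hr : 0 < r) :
    x * Real.log r - x * Real.log x ≤ r - x := by
  rcases hx.eq_or_lt with h | h
  · rw [← h]; simpa using hr.le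
  · have h1 := Real.log_le_sub_one_of_pos (div_pos hr h)
    rw [Real.log_div hr.ne' h.ne'] at h1
    have h2 : x * (Real.log r - Real.log x) ≤ x * (r / x - 1) :=
      mul_le_mul_of_nonneg_left h1 h.le
    have h3 : x * (r / x - 1) = r - x := by field_simp
    rw [h3, mul_sub] at h2
    exact h2

private lemma cont_entropy_bound (p : ℝ → ℝ) (hpos : ∀ x, 0 ≤ p x)
    (hint : Integrable p) (hp1 : ∫ x, p x = 1)
    (hx2 : Integrable (fun x => x ^ 2 * p x))
    (hplogp : Integrable (fun x => p x * Real.log (p x)))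
    (σ : ℝ) (hσ : σ = ∫ θ, θ ^ 2 * p θ) (hσ0 : 0 < σ) :
    -∫ θ, p θ * Real.log (p θ) ≤ Real.log (Real.sqrt (2 * π * σ)) + 1 / 2 := by
  have hπ := Real.pi_pos
  set c : ℝ := Real.sqrt (2 * π * σ) with hcdef
  have hc : 0 < c := Real.sqrt_pos.mpr (by positivity)
  set b : ℝ := (2 * σ)⁻¹ with hbdef
  have hb : 0 < b := by positivity
  set g : ℝ → ℝ := fun θ => c⁻¹ * Real.exp (-b * θ ^ 2) with hgdef
  have hgpos : ∀ θ, 0 < g θ := fun θ => mul_pos (inv_pos.mpr hc) (Real.exp_pos _)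
  have hgint : Integrable g := (integrable_exp_neg_mul_sq hb).const_mul _
  have hgval : ∫ θ, g θ = 1 := by
    rw [hgdef]
    rw [integral_const_mul, integral_gaussian b]
    have : π / b = 2 * π * σ := by rw [hbdef]; field_simp
    rw [this, ← hcdef, inv_mul_cancel₀ hc.ne']
  have hlogg : ∀ θ, Real.log (g θ) = -Real.log c - b * θ ^ 2 := by
    intro θ
    rw [hgdef]
    rw [Real.log_mul (inv_ne_zero hc.ne') (Real.exp_ne_zero _), Real.log_inv,
      Real.log_exp]
    ring
  have hf1eq : (fun θ => p θ * Real.log (g θ))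
      = fun θ => -Real.log c * p θ - b * (θ ^ 2 * p θ) := by
    funext θ; rw [hlogg θ]; ring
  have hf1int : Integrable (fun θ => p θ * Real.log (g θ)) := by
    rw [hf1eq]; exact (hint.const_mul _).sub (hx2.const_mul _)
  have hf1val : ∫ θ, p θ * Real.log (g θ) = -Real.log c - 1 / 2 := by
    rw [hf1eq, integral_sub (hint.const_mul _) (hx2.const_mul _),
      integral_const_mul, integral_const_mul, hp1, ← hσ]
    have : b * σ = 1 / 2 := by rw [hbdef]; field_simp
    rw [this]; ring
  have hmono : ∫ θ, (p θ * Real.log (g θ) - p θ * Real.log (p θ))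
      ≤ ∫ θ, (g θ - p θ) :=
    integral_mono (hf1int.sub hplogp) (hgint.sub hint)
      (fun θ => gibbs_pt (hpos θ) (hgpos θ))
  rw [integral_sub hf1int hplogp, integral_sub hgint hint, hgval, hp1,
    hf1val] at hmono
  linarith

private lemma discrete_entropy_bound (q : ℕ → ℝ) (hq : ∀ n, 0 ≤ q n)
    (hqsum : Summable q) (hq1 : ∑' n, q n = 1)
    (hqmean : Summable (fun n : ℕ => (n : ℝ) * q n))
    (hqent : Summable (fun n => q n * Real.log (q n)))
    (Nmean : ℝ) (hN : Nmean = ∑' n : ℕ, (n : ℝ) * q n) :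
    -∑' n, q n * Real.log (q n) < Real.log (Nmean + 1) + 1 := by
  have hNn : 0 ≤ Nmean := by
    rw [hN]; exact tsum_nonneg fun n => mul_nonneg (Nat.cast_nonneg n) (hq n)
  rcases hNn.eq_or_lt with h0 | h0
  · -- Nmean = 0 : then q is concentrated at 0, entropy is 0
    have hz : ∀ n : ℕ, n ≠ 0 → q n = 0 := by
      intro n hn
      have hle : (n : ℝ) * q n ≤ ∑' m : ℕ, (m : ℝ) * q m :=
        hqmean.le_tsum n fun m _ => mul_nonneg (Nat.cast_nonneg m) (hq m)
      rw [← hN, ← h0] at hle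
      have hge : 0 ≤ (n : ℝ) * q n := mul_nonneg (Nat.cast_nonneg n) (hq n)
      have : (n : ℝ) * q n = 0 := le_antisymm hle hge
      rcases mul_eq_zero.mp this with h | h
      · exact absurd h (Nat.cast_ne_zero.mpr hn)
      · exact h
    have hq0 : q 0 = 1 := by
      rw [← hq1, tsum_eq_single 0 fun n hn => hz n hn]
    have hent : ∑' n, q n * Real.log (q n) = q 0 * Real.log (q 0) :=
      tsum_eq_single 0 fun n hn => by rw [hz n hn]; simp
    rw [hent, hq0, ← h0]
    norm_num
  · -- Nmean > 0 : compare with geometric distribution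
    have hN1 : (0 : ℝ) < Nmean + 1 := by linarith
    set a : ℝ := (Nmean + 1)⁻¹ with hadef
    set t : ℝ := Nmean / (Nmean + 1) with htdef
    have ha : 0 < a := inv_pos.mpr hN1
    have ht0 : 0 < t := div_pos h0 hN1
    have ht1 : t < 1 := (div_lt_one hN1).mpr (by linarith)
    have hrpos : ∀ n : ℕ, 0 < a * t ^ n := fun n => mul_pos ha (pow_pos ht0 n)
    have hrsum : Summable (fun n : ℕ => a * t ^ n) :=
      (summable_geometric_of_lt_one ht0.le ht1).mul_left a
    have hrval : ∑' n : ℕ, a * t ^ n = 1 := by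
      rw [tsum_mul_left, tsum_geometric_of_lt_one ht0.le ht1]
      have h1t : 1 - t = a := by rw [htdef, hadef]; field_simp; ring
      rw [h1t, mul_inv_cancel₀ ha.ne']
    have hlogr : ∀ n : ℕ, Real.log (a * t ^ n)
        = Real.log a + (n : ℝ) * Real.log t := by
      intro n
      rw [Real.log_mul ha.ne' (pow_pos ht0 n).ne', Real.log_pow]
    have hqlr_eq : (fun n : ℕ => q n * (Real.log a + (n : ℝ) * Real.log t))
        = fun n : ℕ => q n * Real.log a + ((n : ℝ) * q n) * Real.log t := by
      funext n; ring
    have hqlr_sum : Summable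
        (fun n : ℕ => q n * (Real.log a + (n : ℝ) * Real.log t)) := by
      rw [hqlr_eq]; exact (hqsum.mul_right _).add (hqmean.mul_right _)
    have hqlr_val : ∑' n : ℕ, q n * (Real.log a + (n : ℝ) * Real.log t)
        = Real.log a + Nmean * Real.log t := by
      rw [hqlr_eq, Summable.tsum_add (hqsum.mul_right _) (hqmean.mul_right _),
        tsum_mul_right, tsum_mul_right, hq1, ← hN]
      ring
    have key : ∑' n : ℕ, (q n * (Real.log a + (n : ℝ) * Real.log t)
          - q n * Real.log (q n)) ≤ ∑' n : ℕ, (a * t ^ n - q n) := by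
      refine Summable.tsum_le_tsum (fun n => ?_) (hqlr_sum.sub hqent) (hrsum.sub hqsum)
      rw [← hlogr n]
      exact gibbs_pt (hq n) (hrpos n)
    rw [Summable.tsum_sub hqlr_sum hqent, Summable.tsum_sub hrsum hqsum, hq1, hrval,
      hqlr_val] at key
    -- key : log a + Nmean * log t - ∑ q log q ≤ 0
    have hloga : Real.log a = -Real.log (Nmean + 1) := by
      rw [hadef, Real.log_inv]
    have hlogt : Real.log t = Real.log Nmean - Real.log (Nmean + 1) := by
      rw [htdef, Real.log_div h0.ne' hN1.ne']
    have hstrict : Real.log ((Nmean + 1) / Nmean) < 1 / Nmean := by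
      have hpos : 0 < (Nmean + 1) / Nmean := div_pos hN1 h0
      have hne1 : (Nmean + 1) / Nmean ≠ 1 := by
        intro hh
        rw [div_eq_one_iff_eq h0.ne'] at hh
        linarith
      have := Real.log_lt_sub_one_of_pos hpos hne1
      have heq : (Nmean + 1) / Nmean - 1 = 1 / Nmean := by field_simp; ring
      linarith [heq ▸ this]
    have hlogfrac : Real.log ((Nmean + 1) / Nmean)
        = Real.log (Nmean + 1) - Real.log Nmean :=
      Real.log_div hN1.ne' h0.ne'
    -- Nmean * log((N+1)/N) < 1
    have hmul : Nmean * Real.log ((Nmean + 1) / Nmean) < 1 := by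
      have := mul_lt_mul_of_pos_left hstrict h0
      rw [mul_one_div, div_self h0.ne'] at this
      exact this
    rw [hlogfrac] at hmul
    rw [hloga, hlogt] at key
    nlinarith [key, hmul]

/-- If a probability density p on [-π,π] (with second moment (δΦ̂)²) and a
probability distribution q on ℕ (with finite mean) satisfy the entropic
uncertainty relation H(p) + H(q) ≥ log 2π, then δΦ̂ > √(2π/e³)/(⟨N⟩+1). -/
theorem heisenberg_limit_analytic
    (p : ℝ → ℝ) (hmeas : Measurable p) (hpos : ∀ x, 0 ≤ p x)
    (hsupp : ∀ x, x ∉ Set.Icc (-π) π → p x = 0)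
    (hint : Integrable p) (hp1 : ∫ x, p x = 1)
    (hx2 : Integrable (fun x => x ^ 2 * p x))
    (hplogp : Integrable (fun x => p x * Real.log (p x)))
    (q : ℕ → ℝ) (hq : ∀ n, 0 ≤ q n) (hqsum : Summable q) (hq1 : ∑' n, q n = 1)
    (hqmean : Summable (fun n : ℕ => (n : ℝ) * q n))
    (hqent : Summable (fun n => q n * Real.log (q n)))
    (δΦ2 Hp Hq : ℝ)
    (hδ : δΦ2 = ∫ θ, θ ^ 2 * p θ)
    (hHp : Hp = -∫ θ, p θ * Real.log (p θ))
    (hHq : Hq = -∑' n, q n * Real.log (q n))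
    (Nmean : ℝ) (hN : Nmean = ∑' n : ℕ, (n : ℝ) * q n)
    (hEUR : Hp + Hq ≥ Real.log (2 * π)) :
    Real.sqrt δΦ2 > Real.sqrt (2 * π / Real.exp 1 ^ 3) / (Nmean + 1) := by
  have hπ := Real.pi_pos
  -- positivity of the second moment
  have hσnn : 0 ≤ δΦ2 := by
    rw [hδ]; exact integral_nonneg fun θ => mul_nonneg (sq_nonneg θ) (hpos θ)
  have hσ0 : 0 < δΦ2 := by
    rcases hσnn.eq_or_lt with h | h
    · exfalso
      have h0 : ∫ θ, θ ^ 2 * p θ = 0 := by rw [← hδ, ← h]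
      have hae : (fun θ : ℝ => θ ^ 2 * p θ) =ᶠ[ae volume] 0 :=
        (integral_eq_zero_iff_of_nonneg
          (fun θ => mul_nonneg (sq_nonneg θ) (hpos θ)) hx2).mp h0
      have hne : ∀ᵐ θ : ℝ, θ ≠ 0 := by
        refine ae_iff.mpr ?_
        have : {θ : ℝ | ¬θ ≠ 0} = {0} := by ext θ; simp
        rw [this]
        exact measure_singleton 0
      have hp0 : p =ᶠ[ae volume] 0 := by
        filter_upwards [hae, hne] with θ h1 h2
        have hθ2 : θ ^ 2 ≠ 0 := pow_ne_zero _ h2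
        have := mul_eq_zero.mp h1
        simpa [hθ2] using this
      have : ∫ θ, p θ = 0 := by rw [integral_congr_ae hp0]; simp
      rw [hp1] at this
      norm_num at this
    · exact h
  have hNn : 0 ≤ Nmean := by
    rw [hN]; exact tsum_nonneg fun n => mul_nonneg (Nat.cast_nonneg n) (hq n)
  have hN1 : (0 : ℝ) < Nmean + 1 := by linarith
  have hE := Real.exp_pos 1
  -- the two entropy bounds
  have h1 : Hp ≤ Real.log (Real.sqrt (2 * π * δΦ2)) + 1 / 2 := by
    rw [hHp]
    exact cont_entropy_bound p hpos hint hp1 hx2 hplogp δΦ2 hδ hσ0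
  have h2 : Hq < Real.log (Nmean + 1) + 1 := by
    rw [hHq]
    exact discrete_entropy_bound q hq hqsum hq1 hqmean hqent Nmean hN
  have hls : Real.log (Real.sqrt (2 * π * δΦ2)) = Real.log (2 * π * δΦ2) / 2 :=
    Real.log_sqrt (by positivity)
  -- log (2πσ) > 2 log(2π) - 3 - 2 log(N+1)
  have hkey : 2 * Real.log (2 * π) - 3 - 2 * Real.log (Nmean + 1)
      < Real.log (2 * π * δΦ2) := by
    rw [hls] at h1
    linarith [hEUR, h1, h2]
  set C : ℝ := (2 * π) ^ 2 / (Real.exp 1 ^ 3 * (Nmean + 1) ^ 2) with hCdef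
  have hC : 0 < C := by positivity
  have hlogC : Real.log C
      = 2 * Real.log (2 * π) - 3 - 2 * Real.log (Nmean + 1) := by
    rw [hCdef, Real.log_div (by positivity) (by positivity),
      Real.log_mul (by positivity) (by positivity), Real.log_pow,
      Real.log_pow, Real.log_pow, Real.log_exp]
    push_cast
    ring
  have hCσ : C < 2 * π * δΦ2 := by
    rw [← Real.log_lt_log_iff hC (by positivity), hlogC]
    exact hkey
  have hσgt : 2 * π / (Real.exp 1 ^ 3 * (Nmean + 1) ^ 2) < δΦ2 := by
    have hCeq : C = 2 * π * (2 * π / (Real.exp 1 ^ 3 * (Nmean + 1) ^ 2)) := by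
      rw [hCdef]; ring
    rw [hCeq] at hCσ
    exact lt_of_mul_lt_mul_left hCσ (by positivity)
  have hsqrt : Real.sqrt (2 * π / (Real.exp 1 ^ 3 * (Nmean + 1) ^ 2))
      < Real.sqrt δΦ2 := Real.sqrt_lt_sqrt (by positivity) hσgt
  have heq : Real.sqrt (2 * π / (Real.exp 1 ^ 3 * (Nmean + 1) ^ 2))
      = Real.sqrt (2 * π / Real.exp 1 ^ 3) / (Nmean + 1) := by
    have : 2 * π / (Real.exp 1 ^ 3 * (Nmean + 1) ^ 2)
        = (2 * π / Real.exp 1 ^ 3) / (Nmean + 1) ^ 2 := by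
      field_simp
    rw [this, Real.sqrt_div (by positivity), Real.sqrt_sq hN1.le]
  rw [heq] at hsqrt
  exact hsqrt
end

section
/- Suppose a probability density p on [-π, π] and a distribution q on ℕ with mean ⟨N⟩ satisfy H(p) + H(q) ≥ log 2π. Then L := e^{H(p)} satisfies L ≥ 2π e^{-H(q)} > (2π/e)/(⟨N⟩+1). -/
open Real MeasureTheory

lemma pointwise_gibbs (q r : ℝ) (hq : 0 ≤ q) (hr : 0 < r) :
    q - r + q * Real.log r ≤ q * Real.log q := by
  rcases eq_or_lt_of_le hq with h | h
  · simp [← h]; positivity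
  · have h1 : (0:ℝ) < r / q := div_pos hr h
    have h2 := Real.log_le_sub_one_of_pos h1
    rw [Real.log_div hr.ne' h.ne'] at h2
    have h3 : q * (r / q) = r := by field_simp
    nlinarith [mul_le_mul_of_nonneg_left h2 hq]

lemma entropy_nat_bound (q : ℕ → ℝ) (hq : ∀ n, 0 ≤ q n) (hqsum : Summable q)
    (hq1 : ∑' n, q n = 1)
    (hqmean : Summable (fun n : ℕ => (n : ℝ) * q n))
    (hqent : Summable (fun n => q n * Real.log (q n))) :
    -∑' n, q n * Real.log (q n) < Real.log ((∑' n : ℕ, (n : ℝ) * q n) + 1) + 1 := by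
  set N := ∑' n : ℕ, (n : ℝ) * q n with hN
  have hN0 : 0 ≤ N := tsum_nonneg (fun n => mul_nonneg (Nat.cast_nonneg n) (hq n))
  rcases eq_or_lt_of_le hN0 with h0 | hpos
  · -- N = 0 : q n = 0 for n ≥ 1, q 0 = 1
    have hz : ∀ n : ℕ, n ≠ 0 → q n = 0 := by
      intro n hn
      have hle : (n : ℝ) * q n ≤ N :=
        hqmean.le_tsum n (fun m _ => mul_nonneg (Nat.cast_nonneg m) (hq m))
      have : (n : ℝ) * q n = 0 :=
        le_antisymm (by linarith [hle, h0.symm ▸ hle]) (mul_nonneg (Nat.cast_nonneg n) (hq n))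
      have hn' : (0:ℝ) < (n:ℝ) := by exact_mod_cast Nat.pos_of_ne_zero hn
      nlinarith
    have hq0 : q 0 = 1 := by
      rw [← hq1]
      exact (tsum_eq_single 0 (fun n hn => hz n hn)).symm
    have : ∑' n, q n * Real.log (q n) = 0 := by
      rw [tsum_eq_single 0 (fun n hn => by simp [hz n hn])]
      simp [hq0]
    rw [this, ← h0]
    simp
  · -- N > 0 : compare with geometric
    set c : ℝ := N / (N + 1) with hc
    have hc0 : 0 < c := div_pos hpos (by linarith)
    have hc1 : c < 1 := (div_lt_one (by linarith)).2 (by linarith)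
    have h1c : 1 - c = 1 / (N + 1) := by rw [hc]; field_simp; ring
    have hrsum : Summable (fun n : ℕ => (1 - c) * c ^ n) :=
      (summable_geometric_of_lt_one hc0.le hc1).mul_left _
    have hrtsum : ∑' n : ℕ, (1 - c) * c ^ n = 1 := by
      rw [tsum_mul_left, tsum_geometric_of_lt_one hc0.le hc1,
        mul_inv_cancel₀ (by linarith : (1:ℝ) - c ≠ 0)]
    have hlogr : ∀ n : ℕ, Real.log ((1 - c) * c ^ n) = Real.log (1 - c) + n * Real.log c := by
      intro n
      rw [Real.log_mul (by linarith) (pow_ne_zero n hc0.ne'), Real.log_pow]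
    -- summable f
    have hfsum : Summable (fun n : ℕ => q n - (1 - c) * c ^ n + q n * Real.log ((1 - c) * c ^ n)) := by
      have h1 : Summable (fun n : ℕ => q n * Real.log ((1 - c) * c ^ n)) := by
        have : (fun n : ℕ => q n * Real.log ((1 - c) * c ^ n))
            = fun n : ℕ => Real.log (1 - c) * q n + Real.log c * ((n : ℝ) * q n) := by
          funext n; rw [hlogr n]; ring
        rw [this]
        exact ((hqsum.mul_left _).add (hqmean.mul_left _))
      exact (hqsum.sub hrsum).add h1
    have hle : ∑' n : ℕ, (q n - (1 - c) * c ^ n + q n * Real.log ((1 - c) * c ^ n))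
        ≤ ∑' n, q n * Real.log (q n) := by
      refine Summable.tsum_le_tsum (fun n => ?_) hfsum hqent
      exact pointwise_gibbs (q n) _ (hq n) (mul_pos (by linarith) (pow_pos hc0 n))
    have htsumf : ∑' n : ℕ, (q n - (1 - c) * c ^ n + q n * Real.log ((1 - c) * c ^ n))
        = Real.log (1 - c) + Real.log c * N := by
      have h1 : Summable (fun n : ℕ => q n * Real.log ((1 - c) * c ^ n)) := by
        have : (fun n : ℕ => q n * Real.log ((1 - c) * c ^ n))
            = fun n : ℕ => Real.log (1 - c) * q n + Real.log c * ((n : ℝ) * q n) := by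
          funext n; rw [hlogr n]; ring
        rw [this]
        exact ((hqsum.mul_left _).add (hqmean.mul_left _))
      rw [Summable.tsum_add (hqsum.sub hrsum) h1, Summable.tsum_sub hqsum hrsum, hq1, hrtsum]
      have : (fun n : ℕ => q n * Real.log ((1 - c) * c ^ n))
          = fun n : ℕ => Real.log (1 - c) * q n + Real.log c * ((n : ℝ) * q n) := by
        funext n; rw [hlogr n]; ring
      rw [this, Summable.tsum_add (hqsum.mul_left _) (hqmean.mul_left _), tsum_mul_left,
        tsum_mul_left, hq1, ← hN]
      ring
    have key : -∑' n, q n * Real.log (q n) ≤ -(Real.log (1 - c) + Real.log c * N) := by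
      rw [← htsumf]; linarith
    -- compute the bound
    have hlog1c : Real.log (1 - c) = -Real.log (N + 1) := by
      rw [h1c, Real.log_div one_ne_zero (by linarith), Real.log_one]
      ring
    have hlogc : Real.log c = Real.log N - Real.log (N + 1) := by
      rw [hc, Real.log_div hpos.ne' (by linarith)]
    have hstrict : N * (Real.log (N + 1) - Real.log N) < 1 := by
      have hx : (0:ℝ) < (N + 1) / N := div_pos (by linarith) hpos
      have hx1 : (N + 1) / N ≠ 1 :=
        ne_of_gt ((one_lt_div hpos).2 (by linarith))
      have := Real.log_lt_sub_one_of_pos hx hx1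
      rw [Real.log_div (by linarith) hpos.ne'] at this
      have h2 : (N + 1) / N - 1 = 1 / N := by field_simp; ring
      rw [h2] at this
      have := mul_lt_mul_of_pos_left this hpos
      calc N * (Real.log (N + 1) - Real.log N) < N * (1 / N) := this
        _ = 1 := by field_simp
    calc -∑' n, q n * Real.log (q n) ≤ -(Real.log (1 - c) + Real.log c * N) := key
      _ = Real.log (N + 1) + N * (Real.log (N + 1) - Real.log N) := by
          rw [hlog1c, hlogc]; ring
      _ < Real.log (N + 1) + 1 := by linarith


/-- Ensemble-length Heisenberg bound: if a density p on [-π,π] and a distribution q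
on ℕ with mean ⟨N⟩ satisfy H(p) + H(q) ≥ log 2π, then
L = e^{H(p)} ≥ 2π e^{-H(q)} > (2π/e)/(⟨N⟩+1). -/
theorem ensemble_length_heisenberg
    (p : ℝ → ℝ) (hmeas : Measurable p) (hpos : ∀ x, 0 ≤ p x)
    (hsupp : ∀ x, x ∉ Set.Icc (-π) π → p x = 0)
    (hint : Integrable p) (hp1 : ∫ x, p x = 1)
    (hplogp : Integrable (fun x => p x * Real.log (p x)))
    (q : ℕ → ℝ) (hq : ∀ n, 0 ≤ q n) (hqsum : Summable q) (hq1 : ∑' n, q n = 1)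
    (hqmean : Summable (fun n : ℕ => (n : ℝ) * q n))
    (hqent : Summable (fun n => q n * Real.log (q n)))
    (Hp Hq Nmean L : ℝ)
    (hHp : Hp = -∫ θ, p θ * Real.log (p θ))
    (hHq : Hq = -∑' n, q n * Real.log (q n))
    (hN : Nmean = ∑' n : ℕ, (n : ℝ) * q n)
    (hL : L = Real.exp Hp)
    (hEUR : Hp + Hq ≥ Real.log (2 * π)) :
    L ≥ 2 * π * Real.exp (-Hq) ∧
      2 * π * Real.exp (-Hq) > (2 * π / Real.exp 1) / (Nmean + 1) := by
  have h2pi : (0:ℝ) < 2 * π := by positivity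
  have hHqbound : Hq < Real.log (Nmean + 1) + 1 := by
    rw [hHq, hN]
    exact entropy_nat_bound q hq hqsum hq1 hqmean hqent
  constructor
  · rw [hL]
    have : Real.log (2 * π) - Hq ≤ Hp := by linarith
    calc 2 * π * Real.exp (-Hq) = Real.exp (Real.log (2 * π) - Hq) := by
          rw [Real.exp_sub, Real.exp_log h2pi, Real.exp_neg]; ring
      _ ≤ Real.exp Hp := Real.exp_le_exp.2 (by linarith)
  · have hN1 : (0:ℝ) < Nmean + 1 := by
      have : 0 ≤ Nmean := by
        rw [hN]; exact tsum_nonneg (fun n => mul_nonneg (Nat.cast_nonneg n) (hq n))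
      linarith
    have : Real.exp (-(Real.log (Nmean + 1) + 1)) < Real.exp (-Hq) :=
      Real.exp_lt_exp.2 (by linarith)
    have heq : Real.exp (-(Real.log (Nmean + 1) + 1)) = (1 / Real.exp 1) / (Nmean + 1) := by
      rw [neg_add, Real.exp_add, Real.exp_neg, Real.exp_neg, Real.exp_log hN1]
      field_simp
    calc (2 * π / Real.exp 1) / (Nmean + 1)
        = 2 * π * ((1 / Real.exp 1) / (Nmean + 1)) := by
          field_simp
      _ < 2 * π * Real.exp (-Hq) := by
          rw [← heq]
          exact (mul_lt_mul_iff_right₀ h2pi).2 this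
end

section
/- Let X be a random variable with values in [-π, π] and suppose (E[X²])^{1/2} ≤ k_C/(n+1) for n ≥ 0 where k_C > 0. Then the Holevo variance satisfies (δ_H)² ≤ k_C²/(n+1)² · (1 - k_C²/(2(n+1)²))^{-2}, provided k_C² < 2(n+1)². -/
open MeasureTheory

/-- If a random variable X on [-π,π] has root mean square at most k_C/(n+1)
(with k_C² < 2(n+1)²), then the Holevo variance |E[e^{iX}]|⁻² - 1 is at most
k_C²/(n+1)² · (1 - k_C²/(2(n+1)²))⁻². -/
theorem holevo_variance_asymptotic (Ω : Type*) [MeasureSpace Ω]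
    (ℙ : Measure Ω) [IsProbabilityMeasure ℙ]
    (X : Ω → ℝ) (hmeas : Measurable X)
    (hrange : ∀ ω, X ω ∈ Set.Icc (-Real.pi) Real.pi)
    (hint2 : Integrable (fun ω => (X ω) ^ 2) ℙ)
    (kC n : ℝ) (hkC : 0 < kC) (hn : 0 ≤ n)
    (hrms : Real.sqrt (∫ ω, (X ω) ^ 2 ∂ℙ) ≤ kC / (n + 1))
    (hsmall : kC ^ 2 < 2 * (n + 1) ^ 2) :
    (‖∫ ω, Complex.exp ((X ω : ℂ) * Complex.I) ∂ℙ‖ ^ 2)⁻¹ - 1 ≤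
      kC ^ 2 / (n + 1) ^ 2 * (((1 - kC ^ 2 / (2 * (n + 1) ^ 2)) ^ 2)⁻¹) := by
  have hn1 : (0:ℝ) < n + 1 := by linarith
  set m : ℝ := ∫ ω, (X ω) ^ 2 ∂ℙ with hm
  set t : ℝ := kC ^ 2 / (n + 1) ^ 2 with ht
  have ht0 : 0 ≤ t := by positivity
  have ht2 : t < 2 := by
    rw [ht, div_lt_iff₀ (by positivity)]; linarith
  have hm0 : 0 ≤ m := integral_nonneg fun ω => sq_nonneg _
  have hmt : m ≤ t := by
    have h := pow_le_pow_left₀ (Real.sqrt_nonneg m) hrms 2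
    rwa [Real.sq_sqrt hm0, div_pow] at h
  have hpos : 0 < 1 - t / 2 := by linarith
  -- rewrite the RHS inner term
  have hrw : 1 - kC ^ 2 / (2 * (n + 1) ^ 2) = 1 - t / 2 := by
    rw [ht]; field_simp
  rw [hrw]
  -- integrability of exp(iX)
  have hmexp : Measurable fun ω => Complex.exp ((X ω : ℂ) * Complex.I) :=
    Complex.measurable_exp.comp ((Complex.measurable_ofReal.comp hmeas).mul_const _)
  have hintexp : Integrable (fun ω => Complex.exp ((X ω : ℂ) * Complex.I)) ℙ := by
    refine (integrable_const (1:ℝ)).mono' hmexp.aestronglyMeasurable ?_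
    filter_upwards with ω
    rw [Complex.norm_exp_ofReal_mul_I]
  -- integrability of cos X and of 1 - X^2/2
  have hintcos : Integrable (fun ω => Real.cos (X ω)) ℙ := by
    refine (integrable_const (1:ℝ)).mono'
      (Real.measurable_cos.comp hmeas).aestronglyMeasurable ?_
    filter_upwards with ω
    rw [Real.norm_eq_abs]; exact Real.abs_cos_le_one _
  have hintq : Integrable (fun ω => 1 - (X ω) ^ 2 / 2) ℙ :=
    (integrable_const 1).sub (hint2.div_const 2)
  -- lower bound on the norm of the integral
  have hlow : 1 - m / 2 ≤ ‖∫ ω, Complex.exp ((X ω : ℂ) * Complex.I) ∂ℙ‖ := by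
    have h1 : ∫ ω, (1 - (X ω) ^ 2 / 2) ∂ℙ ≤ ∫ ω, Real.cos (X ω) ∂ℙ :=
      integral_mono hintq hintcos fun ω => Real.one_sub_sq_div_two_le_cos
    have h2 : ∫ ω, (1 - (X ω) ^ 2 / 2) ∂ℙ = 1 - m / 2 := by
      rw [integral_sub (integrable_const 1) (hint2.div_const 2), integral_const,
        probReal_univ, integral_div]
      simp [hm]
    have h3 : ∫ ω, Real.cos (X ω) ∂ℙ
        = (∫ ω, Complex.exp ((X ω : ℂ) * Complex.I) ∂ℙ).re := by
      rw [← RCLike.re_eq_complex_re, ← integral_re hintexp]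
      simp [Complex.exp_ofReal_mul_I_re]
    have h4 : (∫ ω, Complex.exp ((X ω : ℂ) * Complex.I) ∂ℙ).re
        ≤ ‖∫ ω, Complex.exp ((X ω : ℂ) * Complex.I) ∂ℙ‖ :=
      Complex.re_le_norm _
    linarith
  have hlow' : 1 - t / 2 ≤ ‖∫ ω, Complex.exp ((X ω : ℂ) * Complex.I) ∂ℙ‖ := by
    linarith
  have hE2 : (1 - t / 2) ^ 2 ≤ ‖∫ ω, Complex.exp ((X ω : ℂ) * Complex.I) ∂ℙ‖ ^ 2 :=
    pow_le_pow_left₀ hpos.le hlow' 2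
  have hinv : (‖∫ ω, Complex.exp ((X ω : ℂ) * Complex.I) ∂ℙ‖ ^ 2)⁻¹
      ≤ ((1 - t / 2) ^ 2)⁻¹ :=
    inv_anti₀ (by positivity) hE2
  have hai : (0:ℝ) ≤ ((1 - t / 2) ^ 2)⁻¹ := by positivity
  have hcancel : (1 - t / 2) ^ 2 * ((1 - t / 2) ^ 2)⁻¹ = 1 :=
    mul_inv_cancel₀ (by positivity)
  have hfin : ((1 - t / 2) ^ 2)⁻¹ - 1 ≤ t * ((1 - t / 2) ^ 2)⁻¹ := by
    have key : 0 ≤ ((1 - t / 2) ^ 2 - (1 - t)) * ((1 - t / 2) ^ 2)⁻¹ :=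
      mul_nonneg (by nlinarith) hai
    nlinarith [key, hcancel]
  linarith
end
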